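/- Uniform H¹ bound for DNLS: there is a universal constant C > 0 such that for any ν ∈ {−1,1} and any C¹ solution u : ℝ → ℓ²(ℤ) of i u'(t) = Δu(t) + ν|u(t)|²u(t), one has for all t: ‖u(t)‖_{Ḣ¹(ℤ)} ≤ C(‖u(0)‖_{Ḣ¹(ℤ)} + ‖u(0)‖³_{ℓ²(ℤ)}). -/

import Mathlib

noncomputable section

/-- The Hilbert space `ℓ²(ℤ)`. -/
abbrev H : Type := lp (fun _ : ℤ => ℂ) 2

namespace DNLSaux

open Complex

local notation "⟪" x ", " y "⟫" => @inner ℂ H _ x y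

lemma two_toReal : ((2 : ENNReal).toReal) = (2 : ℝ) := by norm_num

lemma summ_sq (f : H) : Summable fun i => ‖f i‖ ^ 2 := by
  have h := (lp.memℓp f).summable (p := 2) (by norm_num)
  rw [two_toReal] at h
  simpa [Real.rpow_two] using h

lemma memH {f : ℤ → ℂ} (h : Summable fun g => ‖f g‖ ^ 2) : Memℓp f 2 := by
  apply memℓp_gen
  rw [two_toReal]
  simpa [Real.rpow_two] using h

lemma norm_sq_eq (f : H) : ‖f‖ ^ 2 = ∑' i, ‖f i‖ ^ 2 := by
  have h := lp.norm_rpow_eq_tsum (p := 2) (by norm_num) f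
  rw [two_toReal] at h
  simpa [Real.rpow_two] using h

lemma inner_eq (f g : H) : ⟪f, g⟫ = ∑' i, (starRingEnd ℂ) (f i) * g i := by
  rw [lp.inner_eq_tsum]
  exact tsum_congr fun i => RCLike.inner_apply' _ _

end DNLSaux
namespace DNLSaux

lemma shift_mem (f : H) : Memℓp (fun g : ℤ => f (g + 1)) 2 := by
  apply memH
  exact ((Equiv.addRight (1 : ℤ)).summable_iff (f := fun h => ‖f h‖ ^ 2)).2 (summ_sq f)

lemma shift_mem' (f : H) : Memℓp (fun g : ℤ => f (g - 1)) 2 := by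
  apply memH
  exact ((Equiv.subRight (1 : ℤ)).summable_iff (f := fun h => ‖f h‖ ^ 2)).2 (summ_sq f)

/-- The right-shift `(S f) g = f (g+1)` as a linear isometry equivalence. -/
def S : H ≃ₗᵢ[ℂ] H :=
{ toFun := fun f => (⟨fun g => f (g + 1), shift_mem f⟩ : H),
  invFun := fun f => (⟨fun g => f (g - 1), shift_mem' f⟩ : H),
  map_add' := fun f g => by
    apply lp.ext; funext x
    simp [lp.coeFn_add]; rfl
  map_smul' := fun c f => by
    apply lp.ext; funext x
    simp [lp.coeFn_smul]
  left_inv := fun f => by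
    apply lp.ext; funext x
    simp
  right_inv := fun f => by
    apply lp.ext; funext x
    simp
  norm_map' := fun f => by
    have h1 := norm_sq_eq f
    have h2 : ‖(⟨fun g => f (g + 1), shift_mem f⟩ : H)‖ ^ 2
        = ∑' g : ℤ, ‖f (g + 1)‖ ^ 2 := norm_sq_eq _
    have h3 : ∑' g : ℤ, ‖f (g + 1)‖ ^ 2 = ∑' g : ℤ, ‖f g‖ ^ 2 :=
      (Equiv.addRight (1 : ℤ)).tsum_eq (fun h => ‖f h‖ ^ 2)
    have : ‖(⟨fun g => f (g + 1), shift_mem f⟩ : H)‖ ^ 2 = ‖f‖ ^ 2 := by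
      rw [h2, h3, ← h1]
    calc ‖(⟨fun g => f (g + 1), shift_mem f⟩ : H)‖
        = Real.sqrt (‖(⟨fun g => f (g + 1), shift_mem f⟩ : H)‖ ^ 2) :=
          (Real.sqrt_sq (norm_nonneg _)).symm
      _ = Real.sqrt (‖f‖ ^ 2) := by rw [this]
      _ = ‖f‖ := Real.sqrt_sq (norm_nonneg _) }

end DNLSaux
set_option maxHeartbeats 1000000

namespace DNLSaux

@[simp] lemma S_apply (f : H) (g : ℤ) : (S f) g = f (g + 1) := rfl
@[simp] lemma S_symm_apply (f : H) (g : ℤ) : (S.symm f) g = f (g - 1) := rfl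

lemma coord_sq_le (f v : H) (i : ℤ) : ‖f i * v i‖ ^ 2 ≤ ‖f‖ ^ 2 * ‖v i‖ ^ 2 := by
  rw [norm_mul, mul_pow]
  have h1 : ‖f i‖ ^ 2 ≤ ‖f‖ ^ 2 :=
    pow_le_pow_left₀ (norm_nonneg _) (lp.norm_apply_le_norm (by norm_num) f i) 2
  exact mul_le_mul_of_nonneg_right h1 (by positivity)

lemma mul_mem (f v : H) : Memℓp (fun i : ℤ => f i * v i) 2 := by
  apply memH
  exact Summable.of_nonneg_of_le (fun i => by positivity) (coord_sq_le f v)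
    ((summ_sq v).mul_left _)

/-- pointwise product as an element of `H`. -/
def Bf (f v : H) : H := (⟨fun i => f i * v i, mul_mem f v⟩ : H)

@[simp] lemma Bf_apply (f v : H) (i : ℤ) : (Bf f v) i = f i * v i := rfl

lemma summ_Bf_sq (f v : H) : Summable fun i : ℤ => ‖f i * v i‖ ^ 2 :=
  Summable.of_nonneg_of_le (fun i => by positivity) (coord_sq_le f v)
    ((summ_sq v).mul_left _)

lemma Bf_norm (f v : H) : ‖Bf f v‖ ≤ ‖f‖ * ‖v‖ := by
  have h : ‖Bf f v‖ ^ 2 ≤ (‖f‖ * ‖v‖) ^ 2 := by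
    rw [norm_sq_eq]
    calc ∑' i : ℤ, ‖(Bf f v) i‖ ^ 2
        ≤ ∑' i : ℤ, ‖f‖ ^ 2 * ‖v i‖ ^ 2 :=
          Summable.tsum_le_tsum (fun i => coord_sq_le f v i) (summ_Bf_sq f v)
            ((summ_sq v).mul_left _)
      _ = ‖f‖ ^ 2 * ∑' i : ℤ, ‖v i‖ ^ 2 := tsum_mul_left
      _ = (‖f‖ * ‖v‖) ^ 2 := by rw [← norm_sq_eq]; ring
  have h2 := Real.sqrt_le_sqrt h
  rwa [Real.sqrt_sq (norm_nonneg _), Real.sqrt_sq (by positivity)] at h2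

/-- pointwise multiplication as a continuous bilinear map over `ℝ`. -/
def B : H →L[ℝ] H →L[ℝ] H :=
  LinearMap.mkContinuous₂
    (LinearMap.mk₂ ℝ Bf
      (fun f f' v => by apply lp.ext; funext i; simp [lp.coeFn_add]; ring)
      (fun c f v => by apply lp.ext; funext i; simp [lp.coeFn_smul]; ring)
      (fun f v v' => by apply lp.ext; funext i; simp [lp.coeFn_add]; ring)
      (fun c f v => by apply lp.ext; funext i; simp [lp.coeFn_smul]; ring))
    1 (fun f v => by simpa using Bf_norm f v)

@[simp] lemma B_apply (f v : H) (i : ℤ) : (B f v) i = f i * v i := rfl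

end DNLSaux
namespace DNLSaux

lemma Q_mem (v : H) : Memℓp (fun i : ℤ => ((‖v i‖ : ℂ) ^ 2) * v i) 2 := by
  apply memH
  have hb : ∀ i : ℤ, ‖((‖v i‖ : ℂ) ^ 2) * v i‖ ^ 2 ≤ (‖v‖ ^ 2) ^ 2 * ‖v i‖ ^ 2 := by
    intro i
    have h1 : ‖v i‖ ≤ ‖v‖ := lp.norm_apply_le_norm (by norm_num) v i
    have h0 : (0:ℝ) ≤ ‖v i‖ := norm_nonneg _
    have he : ‖((‖v i‖ : ℂ) ^ 2) * v i‖ = ‖v i‖ ^ 2 * ‖v i‖ := by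
      rw [norm_mul, norm_pow, Complex.norm_real, Real.norm_eq_abs, abs_of_nonneg h0]
    rw [he]
    have h2 : ‖v i‖ ^ 2 ≤ ‖v‖ ^ 2 := by nlinarith
    calc (‖v i‖ ^ 2 * ‖v i‖) ^ 2 = (‖v i‖ ^ 2) ^ 2 * ‖v i‖ ^ 2 := by ring
      _ ≤ (‖v‖ ^ 2) ^ 2 * ‖v i‖ ^ 2 := by
          have h3 : (‖v i‖ ^ 2) ^ 2 ≤ (‖v‖ ^ 2) ^ 2 := by nlinarith
          exact mul_le_mul_of_nonneg_right h3 (by positivity)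
  exact Summable.of_nonneg_of_le (fun i => by positivity) hb ((summ_sq v).mul_left _)

/-- The nonlinearity `|v|² v` as an element of `H`. -/
def Q (v : H) : H := (⟨fun i => ((‖v i‖ : ℂ) ^ 2) * v i, Q_mem v⟩ : H)

@[simp] lemma Q_apply (v : H) (i : ℤ) : (Q v) i = ((‖v i‖ : ℂ) ^ 2) * v i := rfl

/-- shift as a real continuous linear map. -/
def Scl : H →L[ℝ] H :=
  (S.toLinearIsometry.toContinuousLinearMap).restrictScalars ℝ

@[simp] lemma Scl_apply (v : H) : Scl v = S v := rfl

end DNLSaux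
namespace DNLSaux

local notation "⟪" x ", " y "⟫" => @inner ℂ H _ x y

lemma conj_mul_self (z : ℂ) : (starRingEnd ℂ) z * z = ((‖z‖ : ℂ)) ^ 2 := by
  rw [mul_comm, Complex.mul_conj]
  rw [Complex.normSq_eq_norm_sq]
  push_cast
  ring

lemma hasDerivAt_normsq {z : ℝ → H} {z' : H} {t : ℝ} (hz : HasDerivAt z z' t) :
    HasDerivAt (fun s => ‖z s‖ ^ 2) (2 * Complex.re ⟪z t, z'⟫) t := by
  have h := hz.inner ℂ hz
  have h2 := Complex.reCLM.hasFDerivAt.comp_hasDerivAt t h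
  simp only [Function.comp_def] at h2
  have h3 : (fun s => Complex.reCLM (⟪z s, z s⟫)) = fun s => ‖z s‖ ^ 2 := by
    funext s
    simpa using inner_self_eq_norm_sq (𝕜 := ℂ) (z s)
  rw [h3] at h2
  have h4 : Complex.reCLM ((⟪z t, z'⟫) + (⟪z', z t⟫)) = 2 * Complex.re (⟪z t, z'⟫) := by
    have hre : (⟪z', z t⟫ : ℂ).re = (⟪z t, z'⟫ : ℂ).re := by
      rw [← inner_conj_symm (z t) z']; exact Complex.conj_re _
    simp only [Complex.reCLM_apply, Complex.add_re, hre]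
    ring
  rwa [h4] at h2

end DNLSaux
namespace DNLSaux

local notation "⟪" x ", " y "⟫" => @inner ℂ H _ x y

/-- full RHS of the equation (times `i`). -/
def Z (ν : ℝ) (v : H) : H := S v + S.symm v - (2 : ℂ) • v + (ν : ℂ) • Q v

lemma Z_apply (ν : ℝ) (v : H) (g : ℤ) :
    (Z ν v) g = (v (g + 1) - 2 * v g + v (g - 1)) + (ν : ℂ) * ((‖v g‖ : ℂ)) ^ 2 * v g := by
  have : (Z ν v) g = (S v) g + (S.symm v) g - ((2:ℂ) • v) g + ((ν:ℂ) • Q v) g := by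
    rfl
  rw [this]
  simp [lp.coeFn_smul, -Complex.coe_smul]
  ring

lemma inner_SS (v w : H) : ⟪v, S w⟫ = ⟪S.symm v, w⟫ := by
  rw [← S.inner_map_map (S.symm v) w, S.apply_symm_apply]

lemma inner_Ssymm (v w : H) : ⟪v, S.symm w⟫ = ⟪S v, w⟫ := by
  rw [← S.inner_map_map v (S.symm w), S.apply_symm_apply]

lemma inner_vQv_real (v : H) : ⟪v, Q v⟫ = ((∑' i : ℤ, (‖v i‖ ^ 2) ^ 2 : ℝ) : ℂ) := by
  rw [inner_eq, Complex.ofReal_tsum]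
  apply tsum_congr
  intro i
  have : (starRingEnd ℂ) (v i) * (Q v i) = ((‖v i‖ : ℂ)) ^ 2 * ((starRingEnd ℂ) (v i) * v i) := by
    simp only [Q_apply]; ring
  rw [this, conj_mul_self]
  push_cast
  ring

lemma im_inner_vZ (ν : ℝ) (v : H) : (⟪v, Z ν v⟫).im = 0 := by
  have hexp : ⟪v, Z ν v⟫ = ⟪v, S v⟫ + ⟪v, S.symm v⟫ - 2 * ⟪v, v⟫ + (ν:ℂ) * ⟪v, Q v⟫ := by
    simp [Z, inner_add_right, inner_sub_right, inner_smul_right]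
  rw [hexp]
  have h1 : ⟪v, S.symm v⟫ = (starRingEnd ℂ) ⟪v, S v⟫ := by
    rw [inner_Ssymm, inner_conj_symm]
  have h2 : (⟪v, v⟫).im = 0 := inner_self_im (𝕜 := ℂ) v
  have h3 : (⟪v, Q v⟫).im = 0 := by rw [inner_vQv_real]; simp
  simp only [Complex.add_im, Complex.sub_im, Complex.mul_im, h1, h2, h3, Complex.conj_im,
    Complex.conj_re, Complex.ofReal_re, Complex.ofReal_im, Complex.im_ofNat, Complex.re_ofNat]
  ring

lemma inner_dd (v v' : H) :
    ⟪S v - v, S v' - v'⟫ = ⟪(2:ℂ) • v - S v - S.symm v, v'⟫ := by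
  rw [inner_sub_left, inner_sub_right, inner_sub_right, S.inner_map_map, inner_SS]
  rw [inner_sub_left, inner_sub_left, inner_smul_left]
  simp only [map_ofNat]
  ring

lemma inner_ww₁ (v v' : H) : ⟪Bf v v, Bf v' v⟫ = ⟪Q v, v'⟫ := by
  rw [inner_eq, inner_eq]
  apply tsum_congr
  intro i
  simp only [Bf_apply, Q_apply, map_mul, map_pow, Complex.conj_ofReal]
  linear_combination ((starRingEnd ℂ) (v i) * v' i) * conj_mul_self (v i)

end DNLSaux
namespace DNLSaux

local notation "⟪" x ", " y "⟫" => @inner ℂ H _ x y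

lemma inner_ww₂ (v v' : H) : ⟪Bf v v, Bf v v'⟫ = ⟪Q v, v'⟫ := by
  rw [inner_eq, inner_eq]
  apply tsum_congr
  intro i
  simp only [Bf_apply, Q_apply, map_mul, map_pow, Complex.conj_ofReal]
  linear_combination ((starRingEnd ℂ) (v i) * v' i) * conj_mul_self (v i)

lemma re_inner_smulI (z : H) : (⟪z, (-Complex.I) • z⟫).re = 0 := by
  rw [inner_smul_right]
  have h2 : (⟪z, z⟫).im = 0 := inner_self_im (𝕜 := ℂ) z
  simp [Complex.mul_re, h2, ← Complex.ofReal_pow]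

lemma re_inner_v_u' (ν : ℝ) (v : H) : (⟪v, (-Complex.I) • Z ν v⟫).re = 0 := by
  rw [inner_smul_right]
  have := im_inner_vZ ν v
  simp [Complex.mul_re, this]

end DNLSaux
namespace DNLSaux

local notation "⟪" x ", " y "⟫" => @inner ℂ H _ x y

variable {ν : ℝ} {u u' : ℝ → H}

lemma u'_eq (heq : ∀ (t : ℝ) (g : ℤ),
    Complex.I * (u' t : ℤ → ℂ) g =
      ((u t : ℤ → ℂ) (g + 1) - 2 * (u t : ℤ → ℂ) g + (u t : ℤ → ℂ) (g - 1)) +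
        ν * (‖(u t : ℤ → ℂ) g‖ : ℂ) ^ 2 * (u t : ℤ → ℂ) g) (t : ℝ) :
    u' t = (-Complex.I) • Z ν (u t) := by
  apply lp.ext; funext g
  have h := heq t g
  rw [lp.coeFn_smul, Pi.smul_apply, smul_eq_mul, Z_apply]
  have h2 : (u' t : ℤ → ℂ) g = -Complex.I * (Complex.I * (u' t : ℤ → ℂ) g) := by
    rw [← mul_assoc]
    norm_num
  rw [h2, h]

lemma conservation (hu : ∀ t, HasDerivAt u (u' t) t)
    (hz : ∀ t, u' t = (-Complex.I) • Z ν (u t)) :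
    (∀ t, ‖u t‖ ^ 2 = ‖u 0‖ ^ 2) ∧
    (∀ t, ‖S (u t) - u t‖ ^ 2 - (ν / 2) * ‖Bf (u t) (u t)‖ ^ 2
        = ‖S (u 0) - u 0‖ ^ 2 - (ν / 2) * ‖Bf (u 0) (u 0)‖ ^ 2) := by
  constructor
  · have hN : ∀ t, HasDerivAt (fun s => ‖u s‖ ^ 2) 0 t := by
      intro t
      have h := hasDerivAt_normsq (hu t)
      have hv : 2 * (⟪u t, u' t⟫).re = 0 := by
        rw [hz t, re_inner_v_u' ν (u t)]
        ring
      rwa [hv] at h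
    intro t
    exact is_const_of_deriv_eq_zero (fun t => (hN t).differentiableAt)
      (fun t => (hN t).deriv) t 0
  · have hF : ∀ t, HasDerivAt (fun s => ‖S (u s) - u s‖ ^ 2
        - (ν / 2) * ‖Bf (u s) (u s)‖ ^ 2) 0 t := by
      intro t
      have hSu : HasDerivAt (fun s => S (u s)) (S (u' t)) t := by
        have h := Scl.hasFDerivAt.comp_hasDerivAt t (hu t)
        simpa [Function.comp_def] using h
      have hd : HasDerivAt (fun s => S (u s) - u s) (S (u' t) - u' t) t := hSu.sub (hu t)
      have hBc : HasDerivAt (fun s => B (u s)) (B (u' t)) t := by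
        have h := B.hasFDerivAt.comp_hasDerivAt t (hu t)
        simpa [Function.comp_def] using h
      have hw : HasDerivAt (fun s => Bf (u s) (u s)) (Bf (u' t) (u t) + Bf (u t) (u' t)) t :=
        hBc.clm_apply (hu t)
      have h1 := hasDerivAt_normsq hd
      have h2 := (hasDerivAt_normsq hw).const_mul (ν / 2)
      have h := h1.sub h2
      have hval : 2 * (⟪S (u t) - u t, S (u' t) - u' t⟫).re
          - ν / 2 * (2 * (⟪Bf (u t) (u t), Bf (u' t) (u t) + Bf (u t) (u' t)⟫).re) = 0 := by
        have e1 := inner_dd (u t) (u' t)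
        have e2 : ⟪Bf (u t) (u t), Bf (u' t) (u t) + Bf (u t) (u' t)⟫
            = 2 * ⟪Q (u t), u' t⟫ := by
          rw [inner_add_right, inner_ww₁, inner_ww₂]
          ring
        have e3 : ⟪(2:ℂ) • (u t) - S (u t) - S.symm (u t), u' t⟫
            = (ν : ℂ) * ⟪Q (u t), u' t⟫ - ⟪Z ν (u t), u' t⟫ := by
          simp only [Z, inner_add_left, inner_sub_left, inner_smul_left, map_ofNat,
            Complex.conj_ofReal]
          ring
        have e4 : (⟪Z ν (u t), u' t⟫).re = 0 := by
          rw [hz t]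
          exact re_inner_smulI _
        rw [e1, e3]
        rw [e2]
        simp only [Complex.sub_re, Complex.mul_re, Complex.ofReal_re, Complex.ofReal_im,
          Complex.re_ofNat, Complex.im_ofNat, e4]
        ring
      rwa [hval] at h
    intro t
    exact is_const_of_deriv_eq_zero (fun t => (hF t).differentiableAt)
      (fun t => (hF t).deriv) t 0

end DNLSaux
namespace DNLSaux

/-- summand for the Gagliardo–Nirenberg bound. -/
def bfun (v : H) (h : ℤ) : ℝ := ‖(S v - v) h‖ * (‖v (h + 1)‖ + ‖v h‖)

lemma dv_apply (v : H) (h : ℤ) : (S v - v) h = v (h + 1) - v h := by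
  rw [lp.coeFn_sub]; simp

lemma summ_shift_sq (v : H) : Summable fun h : ℤ => ‖v (h + 1)‖ ^ 2 :=
  ((Equiv.addRight (1 : ℤ)).summable_iff (f := fun h => ‖v h‖ ^ 2)).2 (summ_sq v)

lemma bfun_summable (v : H) : Summable (bfun v) := by
  have hsum : Summable fun h : ℤ =>
      (‖(S v - v) h‖ ^ 2 + (2 * ‖v (h + 1)‖ ^ 2 + 2 * ‖v h‖ ^ 2)) / 2 := by
    apply Summable.div_const
    exact (summ_sq (S v - v)).add (((summ_shift_sq v).mul_left 2).add ((summ_sq v).mul_left 2))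
  apply Summable.of_nonneg_of_le (fun h => by unfold bfun; positivity) _ hsum
  intro h
  unfold bfun
  nlinarith [sq_nonneg (‖(S v - v) h‖ - (‖v (h + 1)‖ + ‖v h‖)),
    sq_nonneg (‖v (h + 1)‖ - ‖v h‖), norm_nonneg ((S v - v) h),
    norm_nonneg (v (h + 1)), norm_nonneg (v h)]

lemma pointwise_bound (v : H) (g : ℤ) : ‖v g‖ ^ 2 ≤ ∑' h : ℤ, bfun v h := by
  set T := ∑' h : ℤ, bfun v h with hT
  -- partial telescoping
  have hstep : ∀ h : ℤ, ‖v h‖ ^ 2 - ‖v (h + 1)‖ ^ 2 ≤ bfun v h := by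
    intro h
    have h1 : ‖v h‖ - ‖v (h + 1)‖ ≤ ‖v h - v (h + 1)‖ := norm_sub_norm_le _ _
    have h2 : ‖v h - v (h + 1)‖ = ‖(S v - v) h‖ := by
      rw [dv_apply, norm_sub_rev]
    unfold bfun
    nlinarith [norm_nonneg (v h), norm_nonneg (v (h + 1)), norm_nonneg ((S v - v) h)]
  have hcsum : Summable fun n : ℕ => bfun v (g + n) :=
    (bfun_summable v).comp_injective (fun a b hab => by omega)
  have hasum : Summable fun n : ℕ => ‖v (g + n)‖ ^ 2 :=
    (summ_sq v).comp_injective (fun a b hab => by omega)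
  have hpart : ∀ N : ℕ, ‖v g‖ ^ 2 - ‖v (g + N)‖ ^ 2 ≤ T := by
    intro N
    have htel : ∑ n ∈ Finset.range N, (‖v (g + n)‖ ^ 2 - ‖v (g + (n + 1))‖ ^ 2)
        = ‖v (g + (0 : ℕ))‖ ^ 2 - ‖v (g + N)‖ ^ 2 :=
      Finset.sum_range_sub' (fun n : ℕ => ‖v (g + n)‖ ^ 2) N
    have hle : ∑ n ∈ Finset.range N, (‖v (g + n)‖ ^ 2 - ‖v (g + (n + 1))‖ ^ 2)
        ≤ ∑ n ∈ Finset.range N, bfun v (g + n) := by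
      apply Finset.sum_le_sum
      intro n _
      have := hstep (g + n)
      have harg : (g + n) + 1 = g + ((n : ℤ) + 1) := by ring
      rw [harg] at this
      convert this using 3 <;> push_cast <;> ring
    have hle2 : ∑ n ∈ Finset.range N, bfun v (g + n) ≤ ∑' n : ℕ, bfun v (g + n) :=
      Summable.sum_le_tsum _ (fun n _ => by unfold bfun; positivity) hcsum
    have hle3 : ∑' n : ℕ, bfun v (g + n) ≤ T := by
      apply Summable.tsum_le_tsum_of_inj (fun n : ℕ => g + (n : ℤ))
        (fun a b hab => by simp only [add_right_inj, Nat.cast_inj] at hab; exact hab)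
        (fun c _ => by unfold bfun; positivity) (fun n => le_rfl) hcsum (bfun_summable v)
    have h0 : ‖v (g + (0 : ℕ))‖ ^ 2 = ‖v g‖ ^ 2 := by simp
    calc ‖v g‖ ^ 2 - ‖v (g + N)‖ ^ 2 = ∑ n ∈ Finset.range N,
          (‖v (g + n)‖ ^ 2 - ‖v (g + (n + 1))‖ ^ 2) := by rw [htel, h0]
      _ ≤ T := le_trans hle (le_trans hle2 hle3)
  have hlim : Filter.Tendsto (fun N : ℕ => ‖v (g + N)‖ ^ 2) Filter.atTop (nhds 0) :=
    hasum.tendsto_atTop_zero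
  have hlim2 : Filter.Tendsto (fun N : ℕ => ‖v (g + N)‖ ^ 2 + T) Filter.atTop (nhds T) := by
    simpa using hlim.add tendsto_const_nhds
  apply ge_of_tendsto hlim2
  filter_upwards with N
  linarith [hpart N]

end DNLSaux
namespace DNLSaux

lemma T_bound_eps (v : H) {ε : ℝ} (hε : 0 < ε) :
    ∑' h : ℤ, bfun v h ≤ (ε / 2) * ‖S v - v‖ ^ 2 + (2 / ε) * ‖v‖ ^ 2 := by
  have hsum : Summable fun h : ℤ =>
      (ε / 2) * ‖(S v - v) h‖ ^ 2 + (1 / ε) * (‖v (h + 1)‖ ^ 2 + ‖v h‖ ^ 2) :=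
    ((summ_sq (S v - v)).mul_left _).add
      (((summ_shift_sq v).add (summ_sq v)).mul_left _)
  have hle : ∀ h : ℤ, bfun v h ≤
      (ε / 2) * ‖(S v - v) h‖ ^ 2 + (1 / ε) * (‖v (h + 1)‖ ^ 2 + ‖v h‖ ^ 2) := by
    intro h
    unfold bfun
    have h1 : ‖(S v - v) h‖ * (‖v (h + 1)‖ + ‖v h‖)
        ≤ (ε / 2) * ‖(S v - v) h‖ ^ 2 + (1 / (2 * ε)) * (‖v (h + 1)‖ + ‖v h‖) ^ 2 := by
      have hrw : (ε / 2) * ‖(S v - v) h‖ ^ 2 + (1 / (2 * ε)) * (‖v (h + 1)‖ + ‖v h‖) ^ 2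
          - ‖(S v - v) h‖ * (‖v (h + 1)‖ + ‖v h‖)
          = (ε * ‖(S v - v) h‖ - (‖v (h + 1)‖ + ‖v h‖)) ^ 2 / (2 * ε) := by
        field_simp
        ring
      have hpos : 0 ≤ (ε * ‖(S v - v) h‖ - (‖v (h + 1)‖ + ‖v h‖)) ^ 2 / (2 * ε) := by
        positivity
      linarith
    have h2 : (‖v (h + 1)‖ + ‖v h‖) ^ 2 ≤ 2 * (‖v (h + 1)‖ ^ 2 + ‖v h‖ ^ 2) := by
      nlinarith [sq_nonneg (‖v (h + 1)‖ - ‖v h‖)]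
    have h3 : (1 / (2 * ε)) * (‖v (h + 1)‖ + ‖v h‖) ^ 2
        ≤ (1 / ε) * (‖v (h + 1)‖ ^ 2 + ‖v h‖ ^ 2) := by
      rw [div_mul_eq_mul_div, div_mul_eq_mul_div, div_le_div_iff₀ (by positivity) hε]
      nlinarith [sq_nonneg (‖v (h + 1)‖ - ‖v h‖), hε.le]
    linarith
  calc ∑' h : ℤ, bfun v h
      ≤ ∑' h : ℤ, ((ε / 2) * ‖(S v - v) h‖ ^ 2 + (1 / ε) * (‖v (h + 1)‖ ^ 2 + ‖v h‖ ^ 2)) :=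
        Summable.tsum_le_tsum hle (bfun_summable v) hsum
    _ = (ε / 2) * ∑' h : ℤ, ‖(S v - v) h‖ ^ 2
        + (1 / ε) * (∑' h : ℤ, (‖v (h + 1)‖ ^ 2 + ‖v h‖ ^ 2)) := by
        rw [Summable.tsum_add (((summ_sq (S v - v)).mul_left _))
          (((summ_shift_sq v).add (summ_sq v)).mul_left _), tsum_mul_left, tsum_mul_left]
    _ = (ε / 2) * ‖S v - v‖ ^ 2 + (1 / ε) * (‖v‖ ^ 2 + ‖v‖ ^ 2) := by
        rw [← norm_sq_eq, Summable.tsum_add (summ_shift_sq v) (summ_sq v), ← norm_sq_eq]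
        congr 3
        rw [norm_sq_eq]
        simpa using (Equiv.addRight (1 : ℤ)).tsum_eq (fun h => ‖v h‖ ^ 2)
    _ = (ε / 2) * ‖S v - v‖ ^ 2 + (2 / ε) * ‖v‖ ^ 2 := by ring

lemma T_bound (v : H) : ∑' h : ℤ, bfun v h ≤ 2 * ‖v‖ * ‖S v - v‖ := by
  by_cases hd : ‖S v - v‖ = 0
  · have hb : ∀ h : ℤ, bfun v h = 0 := by
      intro h
      have h1 : ‖(S v - v) h‖ ≤ ‖S v - v‖ := lp.norm_apply_le_norm (by norm_num) _ h
      have h2 : ‖(S v - v) h‖ = 0 := le_antisymm (hd ▸ h1) (norm_nonneg _)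
      unfold bfun
      rw [h2, zero_mul]
    rw [tsum_congr hb]
    simp [hd]
  · have hv : 0 < ‖v‖ := by
      rcases eq_or_lt_of_le (norm_nonneg v) with h | h
      · exfalso
        apply hd
        have : v = 0 := norm_eq_zero.mp h.symm
        rw [this]
        simp
      · exact h
    have hdpos : 0 < ‖S v - v‖ := lt_of_le_of_ne (norm_nonneg _) (Ne.symm hd)
    have hε : 0 < 2 * ‖v‖ / ‖S v - v‖ := by positivity
    have h := T_bound_eps v hε
    have heq : (2 * ‖v‖ / ‖S v - v‖ / 2) * ‖S v - v‖ ^ 2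
        + (2 / (2 * ‖v‖ / ‖S v - v‖)) * ‖v‖ ^ 2 = 2 * ‖v‖ * ‖S v - v‖ := by
      field_simp
      ring
    rw [heq] at h
    exact h

lemma GN (v : H) : ∑' i : ℤ, (‖v i‖ ^ 2) ^ 2 ≤ 2 * ‖v‖ ^ 3 * ‖S v - v‖ := by
  have hsum4 : Summable fun i : ℤ => (‖v i‖ ^ 2) ^ 2 := by
    have h := summ_Bf_sq v v
    apply h.congr
    intro i
    rw [norm_mul]
    ring
  have hb : ∀ i : ℤ, (‖v i‖ ^ 2) ^ 2 ≤ (∑' h : ℤ, bfun v h) * ‖v i‖ ^ 2 := by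
    intro i
    have := pointwise_bound v i
    nlinarith [sq_nonneg (‖v i‖)]
  calc ∑' i : ℤ, (‖v i‖ ^ 2) ^ 2
      ≤ ∑' i : ℤ, (∑' h : ℤ, bfun v h) * ‖v i‖ ^ 2 :=
        Summable.tsum_le_tsum hb hsum4 ((summ_sq v).mul_left _)
    _ = (∑' h : ℤ, bfun v h) * ‖v‖ ^ 2 := by rw [tsum_mul_left, ← norm_sq_eq]
    _ ≤ (2 * ‖v‖ * ‖S v - v‖) * ‖v‖ ^ 2 := by
        apply mul_le_mul_of_nonneg_right (T_bound v) (by positivity)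
    _ = 2 * ‖v‖ ^ 3 * ‖S v - v‖ := by ring

end DNLSaux
/-- Uniform `H¹` bound for DNLS: there is a universal constant `C > 0` such that every
`C¹` solution of `i u' = Δu + ν|u|²u` (with `ν = ±1`) satisfies, for all `t`,
`‖u(t)‖_{Ḣ¹(ℤ)} ≤ C (‖u(0)‖_{Ḣ¹(ℤ)} + ‖u(0)‖³_{ℓ²(ℤ)})`. -/
theorem DNLS_uniform_H1_bound :
    ∃ C > (0 : ℝ), ∀ (ν : ℝ), ν = 1 ∨ ν = -1 → ∀ (u u' : ℝ → H),
      Continuous u' → (∀ t, HasDerivAt u (u' t) t) →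
      (∀ (t : ℝ) (g : ℤ),
        Complex.I * (u' t : ℤ → ℂ) g =
          ((u t : ℤ → ℂ) (g + 1) - 2 * (u t : ℤ → ℂ) g + (u t : ℤ → ℂ) (g - 1)) +
            ν * (‖(u t : ℤ → ℂ) g‖ : ℂ) ^ 2 * (u t : ℤ → ℂ) g) →
      ∀ t : ℝ,
        Real.sqrt (∑' g : ℤ, ‖(u t : ℤ → ℂ) (g + 1) - (u t : ℤ → ℂ) g‖ ^ 2)
          ≤ C * (Real.sqrt (∑' g : ℤ, ‖(u 0 : ℤ → ℂ) (g + 1) - (u 0 : ℤ → ℂ) g‖ ^ 2)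
              + Real.sqrt (∑' g : ℤ, ‖(u 0 : ℤ → ℂ) g‖ ^ 2) ^ 3) := by
  open DNLSaux in
  refine ⟨2, by norm_num, ?_⟩
  intro ν hν u u' _hcont hu heq t
  have hz : ∀ s, u' s = (-Complex.I) • Z ν (u s) := fun s => u'_eq heq s
  obtain ⟨hNcons, hFcons⟩ := conservation hu hz
  -- identify the sums with norms
  have hdsum : ∀ s : ℝ, (∑' g : ℤ, ‖(u s : ℤ → ℂ) (g + 1) - (u s : ℤ → ℂ) g‖ ^ 2)
      = ‖S (u s) - u s‖ ^ 2 := by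
    intro s
    rw [norm_sq_eq]
    exact (tsum_congr fun g => by rw [dv_apply]).symm
  have husum : (∑' g : ℤ, ‖(u 0 : ℤ → ℂ) g‖ ^ 2) = ‖u 0‖ ^ 2 := (norm_sq_eq (u 0)).symm
  rw [hdsum, hdsum, husum, Real.sqrt_sq (norm_nonneg _), Real.sqrt_sq (norm_nonneg _),
    Real.sqrt_sq (norm_nonneg _)]
  -- notation
  set x := ‖S (u t) - u t‖ with hx
  set a := ‖S (u 0) - u 0‖ with ha
  set m := ‖u 0‖ with hm
  have hmt : ‖u t‖ = m := by
    have h := hNcons t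
    calc ‖u t‖ = Real.sqrt (‖u t‖ ^ 2) := (Real.sqrt_sq (norm_nonneg _)).symm
      _ = Real.sqrt (‖u 0‖ ^ 2) := by rw [h]
      _ = m := Real.sqrt_sq (norm_nonneg _)
  -- the ℓ⁴ quantity
  have hP : ∀ s : ℝ, ‖Bf (u s) (u s)‖ ^ 2 = ∑' i : ℤ, (‖(u s : ℤ → ℂ) i‖ ^ 2) ^ 2 := by
    intro s
    rw [norm_sq_eq]
    exact tsum_congr fun i => by rw [Bf_apply, norm_mul]; ring
  have hPt : ‖Bf (u t) (u t)‖ ^ 2 ≤ 2 * m ^ 3 * x := by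
    rw [hP t]
    calc ∑' i : ℤ, (‖(u t : ℤ → ℂ) i‖ ^ 2) ^ 2 ≤ 2 * ‖u t‖ ^ 3 * ‖S (u t) - u t‖ := GN (u t)
      _ = 2 * m ^ 3 * x := by rw [hmt]
  have hP0 : ‖Bf (u 0) (u 0)‖ ^ 2 ≤ 2 * m ^ 3 * a := by
    rw [hP 0]
    exact GN (u 0)
  have hPt0 : (0:ℝ) ≤ ‖Bf (u t) (u t)‖ ^ 2 := by positivity
  have hP00 : (0:ℝ) ≤ ‖Bf (u 0) (u 0)‖ ^ 2 := by positivity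
  have hcons := hFcons t
  have hx0 : 0 ≤ x := norm_nonneg _
  have ha0 : 0 ≤ a := norm_nonneg _
  have hm0 : 0 ≤ m := norm_nonneg _
  have hb0 : 0 ≤ m ^ 3 := by positivity
  -- main inequality : x² ≤ a² + m³ x + m³ a
  have hkey : x ^ 2 ≤ a ^ 2 + m ^ 3 * x + m ^ 3 * a := by
    rcases hν with hν | hν <;> rw [hν] at hcons <;> nlinarith [hcons, hPt, hP0, hPt0, hP00]
  nlinarith [hkey, sq_nonneg (a + m ^ 3), sq_nonneg (a - m ^ 3), sq_nonneg (x - a - m ^ 3),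
    mul_nonneg ha0 hb0, mul_nonneg hx0 hb0, mul_nonneg hx0 ha0]
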